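/- Let (x₁,x₂,x₃) and (x'₁,x'₂,x'₃) be triples of complex numbers with x₁ ≠ 0, x'₁ ≠ 0, (x₂,x₃) ≠ (0,0), and (x'₂,x'₃) ≠ (0,0) (so that none of the associated canonical matrices equals the identity). Then there exists an invertible matrix T ∈ GL(2,ℂ) with Mᵢ(x) = T⁻¹Mᵢ(x')T for i = 1,2,3 if and only if (x'₁,x'₂,x'₃) is equal to (x₁,x₂,x₃) up to changing the signs of exactly two of the three coordinates (or changing no signs). -/

import Mathlib

open Matrix

/-- The canonical matrix `M₁(x)`. -/
def canM₁ (x₁ : ℂ) : Matrix (Fin 2) (Fin 2) ℂ := !![1, -x₁; 0, 1]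

/-- The canonical matrix `M₂(x)`. -/
def canM₂ (x₁ : ℂ) : Matrix (Fin 2) (Fin 2) ℂ := !![1, 0; x₁, 1]

/-- The canonical matrix `M₃(x)`. -/
noncomputable def canM₃ (x₁ x₂ x₃ : ℂ) : Matrix (Fin 2) (Fin 2) ℂ :=
  !![1 + x₂ * x₃ / x₁, -(x₂ ^ 2) / x₁; x₃ ^ 2 / x₁, 1 - x₂ * x₃ / x₁]

/-- If two complex pairs have equal squares coordinatewise and equal products,
they agree up to a global sign. -/
lemma aux_sq (u v u' v' : ℂ) (hu : u' ^ 2 = u ^ 2) (hv : v' ^ 2 = v ^ 2)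
    (hp : u' * v' = u * v) : (u' = u ∧ v' = v) ∨ (u' = -u ∧ v' = -v) := by
  have hu' : (u' - u) * (u' + u) = 0 := by linear_combination hu
  have hv' : (v' - v) * (v' + v) = 0 := by linear_combination hv
  rcases mul_eq_zero.mp hu' with h2 | h2 <;> rcases mul_eq_zero.mp hv' with h3 | h3
  · exact Or.inl ⟨sub_eq_zero.mp h2, sub_eq_zero.mp h3⟩
  · have h2 := sub_eq_zero.mp h2
    have h3 := eq_neg_of_add_eq_zero_left h3
    rw [h2, h3] at hp
    have huv : u * v = 0 := by linear_combination (-1/2 : ℂ) * hp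
    rcases mul_eq_zero.mp huv with h | h
    · exact Or.inr ⟨by rw [h2, h, neg_zero], h3⟩
    · exact Or.inl ⟨h2, by rw [h3, h, neg_zero]⟩
  · have h2 := eq_neg_of_add_eq_zero_left h2
    have h3 := sub_eq_zero.mp h3
    rw [h2, h3] at hp
    have huv : u * v = 0 := by linear_combination (-1/2 : ℂ) * hp
    rcases mul_eq_zero.mp huv with h | h
    · exact Or.inl ⟨by rw [h2, h, neg_zero], h3⟩
    · exact Or.inr ⟨h2, by rw [h3, h, neg_zero]⟩
  · exact Or.inr ⟨eq_neg_of_add_eq_zero_left h2, eq_neg_of_add_eq_zero_left h3⟩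

/-- Two canonical triples are conjugated by an invertible matrix `T`
if and only if the parameter triples coincide up to changing the signs of exactly two
of the three coordinates (or changing no signs). -/
theorem canonical_triples_conjugated_iff (x₁ x₂ x₃ x₁' x₂' x₃' : ℂ)
    (h1 : x₁ ≠ 0) (h1' : x₁' ≠ 0)
    (h23 : ¬(x₂ = 0 ∧ x₃ = 0)) (h23' : ¬(x₂' = 0 ∧ x₃' = 0)) :
    (∃ T : Matrix (Fin 2) (Fin 2) ℂ, IsUnit T ∧
      canM₁ x₁ = T⁻¹ * canM₁ x₁' * T ∧
      canM₂ x₁ = T⁻¹ * canM₂ x₁' * T ∧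
      canM₃ x₁ x₂ x₃ = T⁻¹ * canM₃ x₁' x₂' x₃' * T) ↔
    ((x₁', x₂', x₃') = (x₁, x₂, x₃) ∨
     (x₁', x₂', x₃') = (x₁, -x₂, -x₃) ∨
     (x₁', x₂', x₃') = (-x₁, x₂, -x₃) ∨
     (x₁', x₂', x₃') = (-x₁, -x₂, x₃)) := by
  constructor
  · rintro ⟨T, hT, g1, g2, g3⟩
    have hdet : IsUnit T.det := (Matrix.isUnit_iff_isUnit_det T).mp hT
    have hTT : T * T⁻¹ = 1 := Matrix.mul_nonsing_inv T hdet
    have e1 : canM₁ x₁' * T = T * canM₁ x₁ := by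
      rw [g1, ← Matrix.mul_assoc, ← Matrix.mul_assoc, hTT, Matrix.one_mul]
    have e2 : canM₂ x₁' * T = T * canM₂ x₁ := by
      rw [g2, ← Matrix.mul_assoc, ← Matrix.mul_assoc, hTT, Matrix.one_mul]
    have e3 : canM₃ x₁' x₂' x₃' * T = T * canM₃ x₁ x₂ x₃ := by
      rw [g3, ← Matrix.mul_assoc, ← Matrix.mul_assoc, hTT, Matrix.one_mul]
    rw [← Matrix.ext_iff] at e1 e2 e3
    have e1b := e1 0 1
    have e1c := e1 1 1
    have e2a := e2 0 0
    have e2c := e2 1 0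
    simp [canM₁, canM₂, Matrix.mul_apply, Fin.sum_univ_two] at e1b e1c e2a e2c
    have hc : T 1 0 = 0 := e1c.resolve_right h1
    have hb : T 0 1 = 0 := e2a.resolve_right h1
    have hda : x₁' * T 1 1 = T 0 0 * x₁ := by linear_combination -e1b
    have had : x₁' * T 0 0 = T 1 1 * x₁ := by linear_combination e2c
    have hdetne : T.det ≠ 0 := hdet.ne_zero
    rw [Matrix.det_fin_two, hb, hc] at hdetne
    simp only [mul_zero, zero_mul, sub_zero] at hdetne
    have ha : T 0 0 ≠ 0 := fun h => hdetne (by rw [h, zero_mul])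
    have hd : T 1 1 ≠ 0 := fun h => hdetne (by rw [h, mul_zero])
    have e3a := e3 0 0
    have e3b := e3 0 1
    have e3c := e3 1 0
    simp [canM₃, Matrix.mul_apply, Fin.sum_univ_two, hb, hc] at e3a e3b e3c
    field_simp at e3a e3b e3c
    have hsq : x₁' ^ 2 * (T 0 0 * T 1 1) = x₁ ^ 2 * (T 0 0 * T 1 1) := by
      linear_combination x₁' * T 0 0 * hda + x₁ * T 0 0 * had
    have hsq2 : x₁' ^ 2 = x₁ ^ 2 := mul_right_cancel₀ hdetne hsq
    have hfac : (x₁' - x₁) * (x₁' + x₁) = 0 := by linear_combination hsq2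
    rcases mul_eq_zero.mp hfac with hx | hx
    · -- x₁' = x₁
      have hx := sub_eq_zero.mp hx
      subst hx
      have hDA : T 1 1 = T 0 0 := by
        apply mul_left_cancel₀ h1
        linear_combination -had
      rw [hDA] at e3b e3c
      have hp : x₂' * x₃' = x₂ * x₃ :=
        mul_right_cancel₀ (mul_ne_zero ha h1) (by linear_combination T 0 0 * e3a)
      have hq : x₂' ^ 2 = x₂ ^ 2 :=
        mul_right_cancel₀ (mul_ne_zero ha h1) (by linear_combination -e3b)
      have hr : x₃' ^ 2 = x₃ ^ 2 :=
        mul_right_cancel₀ (mul_ne_zero ha h1) (by linear_combination e3c)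
      rcases aux_sq x₂ x₃ x₂' x₃' hq hr hp with ⟨hu, hv⟩ | ⟨hu, hv⟩
      · exact Or.inl (by rw [hu, hv])
      · exact Or.inr (Or.inl (by rw [hu, hv]))
    · -- x₁' = -x₁
      have hx := eq_neg_of_add_eq_zero_left hx
      subst hx
      have hDA : T 0 0 = -T 1 1 := by
        apply mul_left_cancel₀ h1
        linear_combination -had
      rw [hDA] at e3b e3c
      have hp : x₂' * x₃' = x₂ * -x₃ :=
        mul_right_cancel₀ (mul_ne_zero hd h1) (by linear_combination T 1 1 * e3a)
      have hq : x₂' ^ 2 = x₂ ^ 2 :=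
        mul_right_cancel₀ (mul_ne_zero hd h1) (by linear_combination -e3b)
      have hr : x₃' ^ 2 = (-x₃) ^ 2 :=
        mul_right_cancel₀ (mul_ne_zero hd h1) (by linear_combination -e3c)
      rcases aux_sq x₂ (-x₃) x₂' x₃' hq hr hp with ⟨hu, hv⟩ | ⟨hu, hv⟩
      · exact Or.inr (Or.inr (Or.inl (by rw [hu, hv])))
      · exact Or.inr (Or.inr (Or.inr (by rw [hu, hv, neg_neg])))
  · rintro (h | h | h | h) <;>
      simp only [Prod.mk.injEq] at h <;>
      obtain ⟨ha, hb, hc⟩ := h <;> subst ha <;> subst hb <;> subst hc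
    · exact ⟨1, isUnit_one, by simp, by simp, by simp⟩
    · refine ⟨1, isUnit_one, by simp, by simp, ?_⟩
      simp only [inv_one, Matrix.one_mul, Matrix.mul_one]
      ext i j
      fin_cases i <;> fin_cases j <;> simp [canM₃] <;> ring
    · have hT2 : (!![(1:ℂ), 0; 0, -1]) * !![1, 0; 0, -1] = 1 := by
        ext i j
        fin_cases i <;> fin_cases j <;>
          simp [Matrix.mul_apply, Fin.sum_univ_two, Matrix.one_apply]
      have hU : IsUnit (!![(1:ℂ), 0; 0, -1]) := by
        apply (Matrix.isUnit_iff_isUnit_det _).mpr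
        simp [Matrix.det_fin_two_of]
      refine ⟨!![1, 0; 0, -1], hU, ?_, ?_, ?_⟩
      all_goals {
        rw [Matrix.inv_eq_right_inv hT2]
        ext i j
        fin_cases i <;> fin_cases j <;>
          simp [canM₁, canM₂, canM₃, Matrix.mul_apply, Fin.sum_univ_two] <;>
          field_simp <;> ring
      }
    · have hT2 : (!![(1:ℂ), 0; 0, -1]) * !![1, 0; 0, -1] = 1 := by
        ext i j
        fin_cases i <;> fin_cases j <;>
          simp [Matrix.mul_apply, Fin.sum_univ_two, Matrix.one_apply]
      have hU : IsUnit (!![(1:ℂ), 0; 0, -1]) := by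
        apply (Matrix.isUnit_iff_isUnit_det _).mpr
        simp [Matrix.det_fin_two_of]
      refine ⟨!![1, 0; 0, -1], hU, ?_, ?_, ?_⟩
      all_goals {
        rw [Matrix.inv_eq_right_inv hT2]
        ext i j
        fin_cases i <;> fin_cases j <;>
          simp [canM₁, canM₂, canM₃, Matrix.mul_apply, Fin.sum_univ_two] <;>
          field_simp <;> ring
      }
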